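/- If G is a stepwise transmission irregular (STI) graph of order n ≥ 5, then ecc(G) ≥ 2n, with equality if and only if G is isomorphic to K_{(n−1)/2,(n+1)/2}. -/

import Mathlib

open Finset

variable {V : Type*}

/-- The transmission of a vertex `v`: the sum of distances from `v` to all vertices. -/
noncomputable def transmission [Fintype V] (G : SimpleGraph V) (v : V) : ℕ :=
  ∑ u, G.dist v u

/-- A connected graph is stepwise transmission irregular (STI) if the transmissions of
the endpoints of every edge differ by exactly one. -/
def IsSTI [Fintype V] (G : SimpleGraph V) : Prop :=
  G.Connected ∧ ∀ u v : V, G.Adj u v →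
    ((transmission G u : ℤ) - (transmission G v : ℤ)).natAbs = 1

/-- The eccentricity of a vertex: the maximum distance to other vertices. -/
noncomputable def eccentricity [Fintype V] (G : SimpleGraph V) (v : V) : ℕ :=
  Finset.univ.sup fun u => G.dist v u

/-- The eccentricity of a graph: the sum of the eccentricities of its vertices. -/
noncomputable def graphEcc [Fintype V] (G : SimpleGraph V) : ℕ :=
  ∑ v, eccentricity G v

section Aux

variable [Fintype V] {G : SimpleGraph V}

private lemma dist_le_ecc (v u : V) : G.dist v u ≤ eccentricity G v :=
  Finset.le_sup (Finset.mem_univ u)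

private lemma parity_adj (hSTI : IsSTI G) {u v : V} (h : G.Adj u v) :
    transmission G u % 2 ≠ transmission G v % 2 := by
  have := hSTI.2 u v h
  omega

private lemma parity_walk (hSTI : IsSTI G) {u v : V} (w : G.Walk u v) :
    (transmission G u + w.length) % 2 = transmission G v % 2 := by
  induction w with
  | nil => simp
  | @cons a b c h p ih =>
    have := parity_adj hSTI h
    simp only [SimpleGraph.Walk.length_cons]
    omega

private lemma parity_dist (hSTI : IsSTI G) (u v : V) :
    (transmission G u + G.dist u v) % 2 = transmission G v % 2 := by
  obtain ⟨w, hw⟩ := hSTI.1.exists_walk_length_eq_dist u v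
  have := parity_walk hSTI w
  omega

private lemma dist_le_two_of_common {u v w : V} (h1 : G.Adj u w) (h2 : G.Adj w v) :
    G.dist u v ≤ 2 := by
  have := SimpleGraph.dist_le
    (SimpleGraph.Walk.cons h1 (SimpleGraph.Walk.cons h2 SimpleGraph.Walk.nil))
  simpa using this

private lemma exists_adj (hconn : G.Connected) (h2 : 2 ≤ Fintype.card V) :
    ∃ u w : V, G.Adj u w := by
  obtain ⟨u⟩ := hconn.nonempty
  obtain ⟨w, hw⟩ := Fintype.exists_ne_of_one_lt_card (by omega) u
  obtain ⟨p, hp⟩ := hconn.exists_walk_length_eq_dist w u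
  cases p with
  | nil => exact absurd rfl hw
  | cons h _ => exact ⟨_, _, h⟩

private lemma two_le_ecc (hSTI : IsSTI G) (hn : 5 ≤ Fintype.card V) (v : V) :
    2 ≤ eccentricity G v := by
  classical
  by_contra hlt
  push_neg at hlt
  have hd : ∀ u, G.dist v u ≤ 1 := fun u => by
    have := dist_le_ecc (G := G) v u; omega
  have hadj : ∀ u, u ≠ v → G.Adj v u := by
    intro u hu
    have h0 : 0 < G.dist v u := hSTI.1.pos_dist_of_ne (fun h => hu h.symm)
    have h1 := hd u
    exact SimpleGraph.dist_eq_one_iff_adj.mp (by omega)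
  have hstar : ∀ u w, u ≠ v → w ≠ v → ¬ G.Adj u w := by
    intro u w hu hw hadj'
    have p1 := parity_adj hSTI (hadj u hu)
    have p2 := parity_adj hSTI (hadj w hw)
    have p3 := parity_adj hSTI hadj'
    omega
  have hduw : ∀ u w, u ≠ v → w ≠ v → u ≠ w → G.dist u w = 2 := by
    intro u w hu hw huw
    have hle := dist_le_two_of_common ((hadj u hu).symm) (hadj w hw)
    have h0 : 0 < G.dist u w := hSTI.1.pos_dist_of_ne huw
    have h1 : G.dist u w ≠ 1 := fun h =>
      hstar u w hu hw (SimpleGraph.dist_eq_one_iff_adj.mp h)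
    omega
  have htv : transmission G v = Fintype.card V - 1 := by
    unfold transmission
    rw [← Finset.sum_erase_add _ _ (Finset.mem_univ v), SimpleGraph.dist_self]
    rw [Finset.sum_congr rfl (fun u hu =>
      SimpleGraph.dist_eq_one_iff_adj.mpr (hadj u (Finset.mem_erase.mp hu).1))]
    rw [Finset.sum_const, Finset.card_erase_of_mem (Finset.mem_univ v)]
    simp [Finset.card_univ]
  obtain ⟨u0, hu0⟩ := Fintype.exists_ne_of_one_lt_card (by omega) v
  have htu : transmission G u0 = 2 * (Fintype.card V - 2) + 1 := by
    unfold transmission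
    rw [← Finset.sum_erase_add _ _ (Finset.mem_univ v)]
    have hu0mem : u0 ∈ Finset.univ.erase v := Finset.mem_erase.mpr ⟨hu0, Finset.mem_univ u0⟩
    rw [← Finset.sum_erase_add _ _ hu0mem, SimpleGraph.dist_self]
    have heq : ∀ w ∈ (Finset.univ.erase v).erase u0, G.dist u0 w = 2 := by
      intro w hw
      obtain ⟨hwu, hw'⟩ := Finset.mem_erase.mp hw
      exact hduw u0 w hu0 (Finset.mem_erase.mp hw').1 (fun h => hwu h.symm)
    rw [Finset.sum_congr rfl heq, Finset.sum_const]
    have hdv : G.dist u0 v = 1 :=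
      SimpleGraph.dist_eq_one_iff_adj.mpr ((hadj u0 hu0).symm)
    rw [hdv, Finset.card_erase_of_mem hu0mem,
      Finset.card_erase_of_mem (Finset.mem_univ v), Finset.card_univ]
    simp only [smul_eq_mul]
    omega
  have := hSTI.2 v u0 (hadj u0 hu0)
  rw [htv, htu] at this
  omega

private lemma iso_of_bipartition (q : V → Bool)
    (hadj : ∀ u w, G.Adj u w ↔ q u ≠ q w) {a b : ℕ}
    (ha : (Finset.univ.filter (fun v => q v = true)).card = a)
    (hb : (Finset.univ.filter (fun v => ¬ (q v = true))).card = b) :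
    Nonempty (G ≃g completeBipartiteGraph (Fin a) (Fin b)) := by
  classical
  have eA : {v // q v = true} ≃ Fin a :=
    Fintype.equivFinOfCardEq (by rw [Fintype.card_subtype]; exact ha)
  have eB : {v // ¬ (q v = true)} ≃ Fin b :=
    Fintype.equivFinOfCardEq (by rw [Fintype.card_subtype]; exact hb)
  refine ⟨⟨(Equiv.sumCompl (fun v => q v = true)).symm.trans (Equiv.sumCongr eA eB), ?_⟩⟩
  intro u w
  by_cases hu : q u = true <;> by_cases hw : q w = true <;>
    simp [Equiv.sumCompl_symm_apply_of_pos, Equiv.sumCompl_symm_apply_of_neg, hu, hw,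
      hadj u w]

end Aux

theorem sti_ecc_lower_bound [Fintype V] (G : SimpleGraph V)
    (hSTI : IsSTI G) (hn : 5 ≤ Fintype.card V) :
    2 * Fintype.card V ≤ graphEcc G ∧
    (graphEcc G = 2 * Fintype.card V ↔ Nonempty (G ≃g completeBipartiteGraph (Fin ((Fintype.card V - 1) / 2)) (Fin ((Fintype.card V + 1) / 2)))) := by
  classical
  have hecc2 : ∀ v, 2 ≤ eccentricity G v := two_le_ecc hSTI hn
  have hlb : 2 * Fintype.card V ≤ graphEcc G := by
    unfold graphEcc
    calc 2 * Fintype.card V = ∑ _v : V, 2 := by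
          simp [Finset.card_univ, mul_comm]
      _ ≤ _ := Finset.sum_le_sum fun v _ => hecc2 v
  refine ⟨hlb, ?_, ?_⟩
  · -- equality implies isomorphism
    intro heq
    have hecc_eq : ∀ v, eccentricity G v = 2 := by
      intro v
      by_contra hv
      have h3 : 3 ≤ eccentricity G v := by have := hecc2 v; omega
      have hge : 2 * Fintype.card V + 1 ≤ graphEcc G := by
        unfold graphEcc
        rw [← Finset.sum_erase_add _ _ (Finset.mem_univ v)]
        have hbound : 2 * (Fintype.card V - 1) ≤ ∑ w ∈ Finset.univ.erase v, eccentricity G w := by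
          calc 2 * (Fintype.card V - 1) = ∑ _w ∈ Finset.univ.erase v, 2 := by
                simp [Finset.card_erase_of_mem, Finset.card_univ, mul_comm]
            _ ≤ _ := Finset.sum_le_sum fun w _ => hecc2 w
        omega
      omega
    have hdist2 : ∀ u v : V, G.dist u v ≤ 2 := fun u v =>
      (hecc_eq u) ▸ dist_le_ecc u v
    set q : V → Bool := fun v => decide (transmission G v % 2 = 0) with hqdef
    have hq_iff : ∀ u w : V, q u ≠ q w ↔ transmission G u % 2 ≠ transmission G w % 2 := by
      intro u w
      simp only [hqdef, ne_eq, decide_eq_decide]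
      omega
    have hadj_iff : ∀ u w : V, G.Adj u w ↔ q u ≠ q w := by
      intro u w
      rw [hq_iff]
      constructor
      · exact fun h => parity_adj hSTI h
      · intro h
        have hne : u ≠ w := fun he => h (he ▸ rfl)
        have h1 : 1 ≤ G.dist u w := hSTI.1.pos_dist_of_ne hne
        have h2 := hdist2 u w
        have h3 := parity_dist hSTI u w
        exact SimpleGraph.dist_eq_one_iff_adj.mp (by omega)
    set A := Finset.univ.filter (fun v => q v = true) with hAdef
    set B := Finset.univ.filter (fun v => ¬ (q v = true)) with hBdef
    have hAB : A.card + B.card = Fintype.card V := by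
      rw [hAdef, hBdef, Finset.card_filter_add_card_filter_not, Finset.card_univ]
    obtain ⟨u0, w0, huw0⟩ := exists_adj hSTI.1 (by omega)
    have hq0 : q u0 ≠ q w0 := (hadj_iff u0 w0).mp huw0
    -- distance formula
    have hd1 : ∀ u w : V, q u ≠ q w → G.dist u w = 1 := fun u w h =>
      SimpleGraph.dist_eq_one_iff_adj.mpr ((hadj_iff u w).mpr h)
    have hd2 : ∀ u w : V, u ≠ w → q u = q w → G.dist u w = 2 := by
      intro u w hne hq
      have h0 : 0 < G.dist u w := hSTI.1.pos_dist_of_ne hne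
      have h1 : G.dist u w ≠ 1 := fun h =>
        ((hadj_iff u w).mp (SimpleGraph.dist_eq_one_iff_adj.mp h)) hq
      have := hdist2 u w
      omega
    -- transmission formula
    have htr : ∀ u : V, q u = true → transmission G u + 2 = 2 * A.card + B.card := by
      intro u hu
      unfold transmission
      rw [← Finset.sum_filter_add_sum_filter_not Finset.univ (fun w => q w = true)]
      have humem : u ∈ A := Finset.mem_filter.mpr ⟨Finset.mem_univ u, hu⟩
      rw [show (Finset.univ.filter (fun w => q w = true)) = A from rfl,
        show (Finset.univ.filter (fun w => ¬ (q w = true))) = B from rfl]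
      rw [← Finset.sum_erase_add _ _ humem, SimpleGraph.dist_self]
      have heqA : ∀ w ∈ A.erase u, G.dist u w = 2 := by
        intro w hw
        obtain ⟨hwu, hw'⟩ := Finset.mem_erase.mp hw
        exact hd2 u w (fun h => hwu h.symm) (hu.trans (Finset.mem_filter.mp hw').2.symm)
      have heqB : ∀ w ∈ B, G.dist u w = 1 := by
        intro w hw
        refine hd1 u w ?_
        rw [hu]
        simpa using (Finset.mem_filter.mp hw).2
      rw [Finset.sum_congr rfl heqA, Finset.sum_congr rfl heqB,
        Finset.sum_const, Finset.sum_const, Finset.card_erase_of_mem humem]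
      have hA1 : 1 ≤ A.card := Finset.card_pos.mpr ⟨u, humem⟩
      simp only [smul_eq_mul]
      omega
    have htr' : ∀ u : V, q u = false → transmission G u + 2 = 2 * B.card + A.card := by
      intro u hu
      unfold transmission
      rw [← Finset.sum_filter_add_sum_filter_not Finset.univ (fun w => q w = true)]
      have humem : u ∈ B := Finset.mem_filter.mpr ⟨Finset.mem_univ u, by simp [hu]⟩
      rw [show (Finset.univ.filter (fun w => q w = true)) = A from rfl,
        show (Finset.univ.filter (fun w => ¬ (q w = true))) = B from rfl]
      rw [← Finset.sum_erase_add _ _ humem, SimpleGraph.dist_self]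
      have heqB : ∀ w ∈ B.erase u, G.dist u w = 2 := by
        intro w hw
        obtain ⟨hwu, hw'⟩ := Finset.mem_erase.mp hw
        have : q w = false := by simpa using (Finset.mem_filter.mp hw').2
        exact hd2 u w (fun h => hwu h.symm) (hu.trans this.symm)
      have heqA : ∀ w ∈ A, G.dist u w = 1 := by
        intro w hw
        refine hd1 u w ?_
        rw [hu, (Finset.mem_filter.mp hw).2]
        simp
      rw [Finset.sum_congr rfl heqB, Finset.sum_congr rfl heqA,
        Finset.sum_const, Finset.sum_const, Finset.card_erase_of_mem humem]
      have hB1 : 1 ≤ B.card := Finset.card_pos.mpr ⟨u, humem⟩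
      simp only [smul_eq_mul]
      omega
    -- |A.card - B.card| = 1
    have hab : A.card = B.card + 1 ∨ B.card = A.card + 1 := by
      have hedge := hSTI.2 u0 w0 huw0
      by_cases h0 : q u0 = true
      · have h0' : q w0 = false := by
          cases hqw : q w0 with
          | false => rfl
          | true => exact absurd (h0.trans hqw.symm) hq0
        have t1 := htr u0 h0
        have t2 := htr' w0 h0'
        omega
      · have h0'' : q u0 = false := by
          cases hqu : q u0 with
          | false => rfl
          | true => exact absurd hqu h0
        have h0' : q w0 = true := by
          cases hqw : q w0 with
          | true => rfl
          | false => exact absurd (h0''.trans hqw.symm) hq0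
        have t1 := htr' u0 h0''
        have t2 := htr w0 h0'
        omega
    rcases hab with hab | hab
    · -- A is the larger part; use ¬q for the left side
      have hiso := iso_of_bipartition (G := G) (fun v => !q v)
        (by intro u w; rw [hadj_iff u w]
            cases hqu : q u <;> cases hqw : q w <;> simp [hqu, hqw])
        (a := (Fintype.card V - 1) / 2) (b := (Fintype.card V + 1) / 2)
        (by rw [show (Finset.univ.filter (fun v => (!q v) = true)) =
              Finset.univ.filter (fun v => ¬ (q v = true)) from
              Finset.filter_congr (fun v _ => by cases hq : q v <;> simp [hq])]
            rw [← hBdef]; omega)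
        (by rw [show (Finset.univ.filter (fun v => ¬ ((!q v) = true))) =
              Finset.univ.filter (fun v => q v = true) from
              Finset.filter_congr (fun v _ => by cases hq : q v <;> simp [hq])]
            rw [← hAdef]; omega)
      exact hiso
    · exact iso_of_bipartition (G := G) q hadj_iff
        (by rw [← hAdef]; omega) (by rw [← hBdef]; omega)
  · -- isomorphism implies equality
    rintro ⟨e⟩
    set q : V → Bool := fun v => (e v).isLeft with hqdef
    have hadj_iff : ∀ u w : V, G.Adj u w ↔ q u ≠ q w := by
      intro u w
      rw [← e.map_rel_iff]
      show (completeBipartiteGraph _ _).Adj (e u) (e w) ↔ _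
      simp only [hqdef]
      cases e u <;> cases e w <;> simp
    obtain ⟨u0, w0, huw0⟩ := exists_adj hSTI.1 (by omega)
    have hq0 : q u0 ≠ q w0 := (hadj_iff u0 w0).mp huw0
    have hecc_le : ∀ v, eccentricity G v ≤ 2 := by
      intro v
      apply Finset.sup_le
      intro u _
      by_cases hvu : v = u
      · rw [hvu, SimpleGraph.dist_self]; omega
      by_cases hq : q u = q v
      · obtain ⟨w, hw⟩ : ∃ w, q w ≠ q v := by
          by_cases h : q u0 = q v
          · exact ⟨w0, fun hc => hq0 (h.trans hc.symm)⟩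
          · exact ⟨u0, h⟩
        have h1 : G.Adj v w := (hadj_iff v w).mpr (fun hc => hw hc.symm)
        have h2 : G.Adj w u := (hadj_iff w u).mpr (fun hc => hw (hc.trans hq))
        exact dist_le_two_of_common h1 h2
      · have : G.Adj v u := (hadj_iff v u).mpr (fun hc => hq hc.symm)
        rw [SimpleGraph.dist_eq_one_iff_adj.mpr this]
        omega
    have hecc_eq : ∀ v, eccentricity G v = 2 := fun v =>
      le_antisymm (hecc_le v) (hecc2 v)
    unfold graphEcc
    rw [Finset.sum_congr rfl (fun v _ => hecc_eq v), Finset.sum_const, Finset.card_univ,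
      smul_eq_mul, mul_comm]
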